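/- Let Φ(t,s) = a t³ + b t² s + c t s² + d s³ be nondegenerate (matrix [[3a,2b,c],[b,2c,3d]] of rank 2), and define r(t₀,s₀) = (−3at₀² − 2bt₀s₀ − cs₀², −bt₀² − 2ct₀s₀ − 3ds₀², t₀, s₀) ∈ ℝ⁴. If u, v ∈ ℝ⁴ are linearly independent, then there exists (t₀,s₀) ∈ ℝ² such that the 3×4 matrix with rows r(t₀,s₀), u, v has rank 3. -/
import Mathlib


/-- for nondegenerate Φ and linearly independent u, v ∈ ℝ⁴,
there exists (t₀,s₀) such that the 3×4 matrix with rows r(t₀,s₀), u, v has rank 3. -/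
theorem stmt9 (a b c d : ℝ)
    (hrank : (Matrix.rank !![3 * a, 2 * b, c; b, 2 * c, 3 * d]) = 2)
    (u v : Fin 4 → ℝ)
    (hindep : LinearIndependent ℝ ![u, v]) :
    ∃ t₀ s₀ : ℝ,
      (Matrix.rank (Matrix.of
        ![(![-(3 * a * t₀ ^ 2) - 2 * b * t₀ * s₀ - c * s₀ ^ 2,
            -(b * t₀ ^ 2) - 2 * c * t₀ * s₀ - 3 * d * s₀ ^ 2, t₀, s₀] : Fin 4 → ℝ),
          u, v])) = 3 := by
  by_contra h0
  push_neg at h0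
  set W : Submodule ℝ (Fin 4 → ℝ) := Submodule.span ℝ (Set.range ![u, v]) with hW
  -- every r(t,s) lies in W
  have hmem : ∀ t s : ℝ,
      (![-(3 * a * t ^ 2) - 2 * b * t * s - c * s ^ 2,
        -(b * t ^ 2) - 2 * c * t * s - 3 * d * s ^ 2, t, s] : Fin 4 → ℝ) ∈ W := by
    intro t s
    by_contra hm
    have hli : LinearIndependent ℝ
        ![(![-(3 * a * t ^ 2) - 2 * b * t * s - c * s ^ 2,
          -(b * t ^ 2) - 2 * c * t * s - 3 * d * s ^ 2, t, s] : Fin 4 → ℝ), u, v] := by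
      rw [show (![(![-(3 * a * t ^ 2) - 2 * b * t * s - c * s ^ 2,
          -(b * t ^ 2) - 2 * c * t * s - 3 * d * s ^ 2, t, s] : Fin 4 → ℝ), u, v]) =
        Fin.cons (![-(3 * a * t ^ 2) - 2 * b * t * s - c * s ^ 2,
          -(b * t ^ 2) - 2 * c * t * s - 3 * d * s ^ 2, t, s] : Fin 4 → ℝ) ![u, v] from rfl]
      exact linearIndependent_fin_cons.2 ⟨hindep, hm⟩
    have := hli.rank_matrix
    simp only [Fintype.card_fin] at this
    exact h0 t s this
  -- extract coefficient vectors
  have he3 : (![0,0,1,0] : Fin 4 → ℝ) ∈ W := by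
    have := W.add_mem (W.smul_mem (1/2) (hmem 1 0)) (W.smul_mem (-(1/2)) (hmem (-1) 0))
    convert this using 1
    funext i; fin_cases i <;> norm_num
  have he4 : (![0,0,0,1] : Fin 4 → ℝ) ∈ W := by
    have := W.add_mem (W.smul_mem (1/2) (hmem 0 1)) (W.smul_mem (-(1/2)) (hmem 0 (-1)))
    convert this using 1
    funext i; fin_cases i <;> norm_num
  have hp : (![-(3*a), -b, 0, 0] : Fin 4 → ℝ) ∈ W := by
    have := W.add_mem (W.smul_mem (1/2) (hmem 1 0)) (W.smul_mem (1/2) (hmem (-1) 0))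
    convert this using 1
    funext i; fin_cases i <;> norm_num <;> ring
  have hq : (![-c, -(3*d), 0, 0] : Fin 4 → ℝ) ∈ W := by
    have := W.add_mem (W.smul_mem (1/2) (hmem 0 1)) (W.smul_mem (1/2) (hmem 0 (-1)))
    convert this using 1
    funext i; fin_cases i <;> norm_num <;> ring
  -- e3, e4 are linearly independent, so they span W
  have he34 : LinearIndependent ℝ ![(![0,0,1,0] : Fin 4 → ℝ), ![0,0,0,1]] := by
    rw [LinearIndependent.pair_iff]
    intro s t hst
    constructor
    · have := congrFun hst 2; simpa using this
    · have := congrFun hst 3; simpa using this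
  set W' : Submodule ℝ (Fin 4 → ℝ) :=
    Submodule.span ℝ (Set.range ![(![0,0,1,0] : Fin 4 → ℝ), ![0,0,0,1]]) with hW'
  have hWeq : W' = W := by
    apply Submodule.eq_of_le_of_finrank_le
    · rw [hW']
      apply Submodule.span_le.2
      rintro x ⟨i, rfl⟩
      fin_cases i
      · exact he3
      · exact he4
    · rw [finrank_span_eq_card hindep, finrank_span_eq_card he34]
  -- p and q lie in span{e3,e4}, forcing a=b=c=d=0
  have hpair : ∀ x : Fin 4 → ℝ, x ∈ W →
      ∃ α β : ℝ, α • (![0,0,1,0] : Fin 4 → ℝ) + β • ![0,0,0,1] = x := by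
    intro x hx
    rw [← hWeq, hW'] at hx
    have : Set.range ![(![0,0,1,0] : Fin 4 → ℝ), ![0,0,0,1]] =
        {(![0,0,1,0] : Fin 4 → ℝ), ![0,0,0,1]} := by
      simp [Set.range_subset_iff, Set.pair_comm]
    rw [this] at hx
    exact Submodule.mem_span_pair.1 hx
  obtain ⟨α, β, hαβ⟩ := hpair _ hp
  obtain ⟨γ, δ, hγδ⟩ := hpair _ hq
  have ha : a = 0 := by have := congrFun hαβ 0; simp at this; linarith
  have hb : b = 0 := by have := congrFun hαβ 1; simp at this; linarith
  have hc : c = 0 := by have := congrFun hγδ 0; simp at this; linarith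
  have hd : d = 0 := by have := congrFun hγδ 1; simp at this; linarith
  subst ha hb hc hd
  rw [show (!![3 * (0:ℝ), 2 * 0, 0; 0, 2 * 0, 3 * 0]) = 0 by ext i j; fin_cases i <;> fin_cases j <;> norm_num,
    Matrix.rank_zero] at hrank
  exact two_ne_zero hrank.symm
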